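/- arXiv:1905.03927 — 4 statements merged into one kernel-verified Lean document; each statement's English description precedes it below -/
import Mathlib

section
/- Let S and A be finite nonempty sets, p : S × A × S → ℝ with p(j|i,a) ≥ 0 and Σ_{j∈S} p(j|i,a) = 1 for all (i,a), r : S × A → ℝ, 0 ≤ γ < 1, and N > 0. The modified Bellman operator U defined by (UQ)(i,a) = r(i,a) + γ·Σ_{j∈S} p(j|i,a)·(1/N)·log(Σ_{b∈A} e^{N·Q(j,b)}) is a contraction with factor γ in the sup norm: for all P, Q : S × A → ℝ, ‖UP − UQ‖ ≤ γ·‖P − Q‖. -/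
/-- The modified (log-sum-exp) Bellman operator `U`:
`(UQ)(i,a) = r(i,a) + γ·Σ_j p(j|i,a)·(1/N)·log(Σ_b e^{N·Q(j,b)})`. -/
noncomputable def modBellmanU {S A : Type*} [Fintype S] [Fintype A]
    (p : S → A → S → ℝ) (r : S → A → ℝ) (γ N : ℝ) (Q : S → A → ℝ) : S → A → ℝ :=
  fun i a => r i a + γ * ∑ j, p i a j *
    ((1 / N) * Real.log (∑ b, Real.exp (N * Q j b)))

/-- Sup norm of a Q-function: `‖Q‖ = max_{(i,a)} |Q(i,a)|`. -/
noncomputable def qSupNorm {S A : Type*} [Fintype S] [Fintype A] [Nonempty S] [Nonempty A]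
    (Q : S → A → ℝ) : ℝ :=
  Finset.univ.sup' Finset.univ_nonempty (fun ia : S × A => |Q ia.1 ia.2|)

lemma lse_le {A : Type*} [Fintype A] [Nonempty A] (N c : ℝ) (hN : 0 < N)
    (f g : A → ℝ) (h : ∀ b, f b - g b ≤ c) :
    Real.log (∑ b, Real.exp (N * f b)) ≤ N * c + Real.log (∑ b, Real.exp (N * g b)) := by
  have hpos : 0 < ∑ b, Real.exp (N * g b) :=
    Finset.sum_pos (fun b _ => Real.exp_pos _) Finset.univ_nonempty
  have hle : (∑ b, Real.exp (N * f b)) ≤ Real.exp (N * c) * ∑ b, Real.exp (N * g b) := by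
    rw [Finset.mul_sum]
    refine Finset.sum_le_sum fun b _ => ?_
    rw [← Real.exp_add]
    apply Real.exp_le_exp.mpr
    nlinarith [h b]
  calc Real.log (∑ b, Real.exp (N * f b))
      ≤ Real.log (Real.exp (N * c) * ∑ b, Real.exp (N * g b)) := by
        apply Real.log_le_log (Finset.sum_pos (fun b _ => Real.exp_pos _) Finset.univ_nonempty) hle
    _ = N * c + Real.log (∑ b, Real.exp (N * g b)) := by
        rw [Real.log_mul (Real.exp_ne_zero _) (ne_of_gt hpos), Real.log_exp]

/-- The modified Bellman operator is a sup-norm contraction with factor `γ`: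
`‖UP − UQ‖ ≤ γ·‖P − Q‖`. -/
theorem modBellmanU_contraction {S A : Type*} [Fintype S] [Fintype A] [Nonempty S] [Nonempty A]
    (p : S → A → S → ℝ) (hp0 : ∀ i a j, 0 ≤ p i a j) (hp1 : ∀ i a, ∑ j, p i a j = 1)
    (r : S → A → ℝ) (γ : ℝ) (hγ0 : 0 ≤ γ) (hγ1 : γ < 1) (N : ℝ) (hN : 0 < N)
    (P Q : S → A → ℝ) :
    qSupNorm (fun i a => modBellmanU p r γ N P i a - modBellmanU p r γ N Q i a) ≤
      γ * qSupNorm (fun i a => P i a - Q i a) := by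
  set c := qSupNorm (fun i a => P i a - Q i a) with hc
  have habs : ∀ j b, |P j b - Q j b| ≤ c := fun j b =>
    Finset.le_sup' (fun ia : S × A => |P ia.1 ia.2 - Q ia.1 ia.2|) (Finset.mem_univ (j, b))
  have key : ∀ j : S,
      |(1 / N) * Real.log (∑ b, Real.exp (N * P j b)) -
        (1 / N) * Real.log (∑ b, Real.exp (N * Q j b))| ≤ c := by
    intro j
    have h1 := lse_le N c hN (P j) (Q j) (fun b => (abs_le.mp (habs j b)).2)
    have h2 := lse_le N c hN (Q j) (P j) (fun b => by
      have := (abs_le.mp (habs j b)).1; linarith)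
    have hinv : (0:ℝ) < 1 / N := by positivity
    have hcan : 1 / N * N = 1 := one_div_mul_cancel (ne_of_gt hN)
    rw [abs_sub_le_iff]
    constructor <;> nlinarith
  apply Finset.sup'_le
  rintro ⟨i, a⟩ _
  simp only [modBellmanU]
  have : r i a + γ * (∑ j, p i a j * ((1 / N) * Real.log (∑ b, Real.exp (N * P j b)))) -
      (r i a + γ * ∑ j, p i a j * ((1 / N) * Real.log (∑ b, Real.exp (N * Q j b)))) =
      γ * ∑ j, p i a j * ((1 / N) * Real.log (∑ b, Real.exp (N * P j b)) -
        (1 / N) * Real.log (∑ b, Real.exp (N * Q j b))) := by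
    have hs : (∑ j, p i a j * ((1 / N) * Real.log (∑ b, Real.exp (N * P j b)) -
        (1 / N) * Real.log (∑ b, Real.exp (N * Q j b)))) =
        (∑ j, p i a j * ((1 / N) * Real.log (∑ b, Real.exp (N * P j b)))) -
        ∑ j, p i a j * ((1 / N) * Real.log (∑ b, Real.exp (N * Q j b))) := by
      rw [← Finset.sum_sub_distrib]
      exact Finset.sum_congr rfl fun j _ => mul_sub _ _ _
    rw [hs]; ring
  rw [this, abs_mul, abs_of_nonneg hγ0]
  apply mul_le_mul_of_nonneg_left _ hγ0
  calc |∑ j, p i a j * ((1 / N) * Real.log (∑ b, Real.exp (N * P j b)) -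
        (1 / N) * Real.log (∑ b, Real.exp (N * Q j b)))|
      ≤ ∑ j, |p i a j * ((1 / N) * Real.log (∑ b, Real.exp (N * P j b)) -
        (1 / N) * Real.log (∑ b, Real.exp (N * Q j b)))| := Finset.abs_sum_le_sum_abs _ _
    _ ≤ ∑ j, p i a j * c := by
        refine Finset.sum_le_sum fun j _ => ?_
        rw [abs_mul, abs_of_nonneg (hp0 i a j)]
        exact mul_le_mul_of_nonneg_left (key j) (hp0 i a j)
    _ = c := by rw [← Finset.sum_mul, hp1, one_mul]
end

section
/- Let S and A be finite nonempty sets, p : S × A × S → ℝ with p(j|i,a) ≥ 0 and Σ_{j∈S} p(j|i,a) = 1 for all (i,a), r : S × A → ℝ, 0 ≤ γ < 1, and N > 0. If Q is a fixed point of the Q-Bellman operator T, (TQ)(i,a) = r(i,a) + γ·Σ_{j∈S} p(j|i,a)·max_{b∈A} Q(j,b), and Q' is a fixed point of the modified Bellman operator U, (UQ)(i,a) = r(i,a) + γ·Σ_{j∈S} p(j|i,a)·(1/N)·log(Σ_{b∈A} e^{N·Q(j,b)}), then ‖Q − Q'‖ ≤ (γ/(N·(1−γ)))·log|A|, where ‖·‖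 denotes the sup norm and |A| is the cardinality of A. -/
/-- The Q-Bellman operator `T`:
`(TQ)(i,a) = r(i,a) + γ·Σ_j p(j|i,a)·max_b Q(j,b)`. -/
noncomputable def bellmanT {S A : Type*} [Fintype S] [Fintype A] [Nonempty A]
    (p : S → A → S → ℝ) (r : S → A → ℝ) (γ : ℝ) (Q : S → A → ℝ) : S → A → ℝ :=
  fun i a => r i a + γ * ∑ j, p i a j *
    Finset.univ.sup' Finset.univ_nonempty (fun b => Q j b)

lemma sup'_le_lse {A : Type*} [Fintype A] [Nonempty A] (N : ℝ) (hN : 0 < N) (f : A → ℝ) :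
    Finset.univ.sup' Finset.univ_nonempty f ≤ (1 / N) * Real.log (∑ b, Real.exp (N * f b)) := by
  obtain ⟨b₀, _, hb₀⟩ := Finset.exists_mem_eq_sup' Finset.univ_nonempty f
  rw [hb₀]
  have h1 : Real.exp (N * f b₀) ≤ ∑ b, Real.exp (N * f b) :=
    Finset.single_le_sum (f := fun b => Real.exp (N * f b)) (fun b _ => (Real.exp_pos _).le) (Finset.mem_univ b₀)
  have h2 : N * f b₀ ≤ Real.log (∑ b, Real.exp (N * f b)) := by
    rw [← Real.log_exp (N * f b₀)]
    exact Real.log_le_log (Real.exp_pos _) h1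
  calc f b₀ = (1 / N) * (N * f b₀) := by field_simp
    _ ≤ (1 / N) * Real.log (∑ b, Real.exp (N * f b)) := by
        apply mul_le_mul_of_nonneg_left h2 (by positivity)

lemma lse_le_sup' {A : Type*} [Fintype A] [Nonempty A] (N : ℝ) (hN : 0 < N) (f : A → ℝ) :
    (1 / N) * Real.log (∑ b, Real.exp (N * f b)) ≤
      Finset.univ.sup' Finset.univ_nonempty f + (1 / N) * Real.log (Fintype.card A) := by
  set M := Finset.univ.sup' Finset.univ_nonempty f with hM
  have h1 : ∑ b, Real.exp (N * f b) ≤ (Fintype.card A : ℝ) * Real.exp (N * M) := by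
    calc ∑ b, Real.exp (N * f b) ≤ ∑ _b : A, Real.exp (N * M) := by
          apply Finset.sum_le_sum
          intro b _
          exact Real.exp_le_exp.2 (mul_le_mul_of_nonneg_left
            (Finset.le_sup' f (Finset.mem_univ b)) hN.le)
      _ = (Fintype.card A : ℝ) * Real.exp (N * M) := by
          simp [Finset.card_univ, nsmul_eq_mul]
  have hpos : (0:ℝ) < ∑ b, Real.exp (N * f b) :=
    Finset.sum_pos (fun b _ => Real.exp_pos _) Finset.univ_nonempty
  have h2 : Real.log (∑ b, Real.exp (N * f b)) ≤ Real.log (Fintype.card A) + N * M := by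
    calc Real.log (∑ b, Real.exp (N * f b)) ≤
        Real.log ((Fintype.card A : ℝ) * Real.exp (N * M)) := Real.log_le_log hpos h1
      _ = Real.log (Fintype.card A) + N * M := by
          rw [Real.log_mul (by positivity) (Real.exp_ne_zero _), Real.log_exp]
  calc (1 / N) * Real.log (∑ b, Real.exp (N * f b))
      ≤ (1 / N) * (Real.log (Fintype.card A) + N * M) :=
        mul_le_mul_of_nonneg_left h2 (by positivity)
    _ = M + (1 / N) * Real.log (Fintype.card A) := by field_simp; ring

/-- If `Q` is a fixed point of `T` and `Q'` a fixed point of `U`, then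
`‖Q − Q'‖ ≤ (γ/(N(1−γ)))·log |A|`. -/
theorem fixedPoint_dist_le {S A : Type*} [Fintype S] [Fintype A] [Nonempty S] [Nonempty A]
    (p : S → A → S → ℝ) (hp0 : ∀ i a j, 0 ≤ p i a j) (hp1 : ∀ i a, ∑ j, p i a j = 1)
    (r : S → A → ℝ) (γ : ℝ) (hγ0 : 0 ≤ γ) (hγ1 : γ < 1) (N : ℝ) (hN : 0 < N)
    (Q Q' : S → A → ℝ) (hQ : bellmanT p r γ Q = Q) (hQ' : modBellmanU p r γ N Q' = Q') :
    qSupNorm (fun i a => Q i a - Q' i a) ≤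
      γ / (N * (1 - γ)) * Real.log (Fintype.card A) := by
  set M := qSupNorm (fun i a => Q i a - Q' i a) with hM
  have hlogA : 0 ≤ Real.log (Fintype.card A) := by
    apply Real.log_nonneg
    exact_mod_cast Nat.one_le_iff_ne_zero.2 Fintype.card_ne_zero
  have hMle : ∀ j b, |Q j b - Q' j b| ≤ M := by
    intro j b
    exact Finset.le_sup' (fun ia : S × A => |Q ia.1 ia.2 - Q' ia.1 ia.2|)
      (Finset.mem_univ (j, b))
  -- per-state bound on |max Q - lse Q'|
  have hD : ∀ j : S,
      |Finset.univ.sup' Finset.univ_nonempty (fun b => Q j b) -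
        (1 / N) * Real.log (∑ b, Real.exp (N * Q' j b))| ≤
      M + (1 / N) * Real.log (Fintype.card A) := by
    intro j
    set mQ := Finset.univ.sup' Finset.univ_nonempty (fun b => Q j b) with hmQ
    set mQ' := Finset.univ.sup' Finset.univ_nonempty (fun b => Q' j b) with hmQ'
    set L := (1 / N) * Real.log (∑ b, Real.exp (N * Q' j b)) with hL
    have hsup1 : mQ ≤ mQ' + M := by
      apply Finset.sup'_le
      intro b _
      have := hMle j b
      have h := abs_le.1 this
      have : Q j b ≤ Q' j b + M := by linarith [h.2]
      calc Q j b ≤ Q' j b + M := this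
        _ ≤ mQ' + M := by
            have := Finset.le_sup' (fun b => Q' j b) (Finset.mem_univ b)
            linarith
    have hsup2 : mQ' ≤ mQ + M := by
      apply Finset.sup'_le
      intro b _
      have h := abs_le.1 (hMle j b)
      have : Q' j b ≤ Q j b + M := by linarith [h.1]
      calc Q' j b ≤ Q j b + M := this
        _ ≤ mQ + M := by
            have := Finset.le_sup' (fun b => Q j b) (Finset.mem_univ b)
            linarith
    have hle1 : mQ' ≤ L := sup'_le_lse N hN (fun b => Q' j b)
    have hle2 : L ≤ mQ' + (1 / N) * Real.log (Fintype.card A) :=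
      lse_le_sup' N hN (fun b => Q' j b)
    rw [abs_le]
    constructor
    · -- -(M + c) ≤ mQ - L, i.e. L ≤ mQ + M + c
      have : L ≤ mQ + M + (1 / N) * Real.log (Fintype.card A) := by linarith
      linarith
    · -- mQ - L ≤ M + c
      have hc : 0 ≤ (1 / N) * Real.log (Fintype.card A) := by positivity
      linarith
  -- pointwise bound
  have hpt : ∀ i a, |Q i a - Q' i a| ≤ γ * (M + (1 / N) * Real.log (Fintype.card A)) := by
    intro i a
    have h1 : Q i a = r i a + γ * ∑ j, p i a j *
        Finset.univ.sup' Finset.univ_nonempty (fun b => Q j b) := by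
      conv_lhs => rw [← hQ]
      rfl
    have h2 : Q' i a = r i a + γ * ∑ j, p i a j *
        ((1 / N) * Real.log (∑ b, Real.exp (N * Q' j b))) := by
      conv_lhs => rw [← hQ']
      rfl
    have hdiff : Q i a - Q' i a = γ * ∑ j, p i a j *
        (Finset.univ.sup' Finset.univ_nonempty (fun b => Q j b) -
          (1 / N) * Real.log (∑ b, Real.exp (N * Q' j b))) := by
      rw [h1, h2, add_sub_add_left_eq_sub, ← mul_sub, ← Finset.sum_sub_distrib]
      congr 1
      exact Finset.sum_congr rfl fun j _ => (mul_sub _ _ _).symm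
    rw [hdiff, abs_mul, abs_of_nonneg hγ0]
    apply mul_le_mul_of_nonneg_left _ hγ0
    calc |∑ j, p i a j * _| ≤ ∑ j, |p i a j *
          (Finset.univ.sup' Finset.univ_nonempty (fun b => Q j b) -
            (1 / N) * Real.log (∑ b, Real.exp (N * Q' j b)))| :=
        Finset.abs_sum_le_sum_abs _ _
      _ ≤ ∑ j, p i a j * (M + (1 / N) * Real.log (Fintype.card A)) := by
          apply Finset.sum_le_sum
          intro j _
          rw [abs_mul, abs_of_nonneg (hp0 i a j)]
          exact mul_le_mul_of_nonneg_left (hD j) (hp0 i a j)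
      _ = M + (1 / N) * Real.log (Fintype.card A) := by
          rw [← Finset.sum_mul, hp1, one_mul]
  -- conclude: M ≤ γ M + γ/N log A
  have hMbound : M ≤ γ * (M + (1 / N) * Real.log (Fintype.card A)) := by
    rw [hM, qSupNorm]
    apply Finset.sup'_le
    intro ia _
    exact hpt ia.1 ia.2
  have h1γ : 0 < 1 - γ := by linarith
  have h2 : N * M ≤ N * γ * M + γ * Real.log (Fintype.card A) := by
    calc N * M ≤ N * (γ * (M + 1 / N * Real.log (Fintype.card A))) :=
          mul_le_mul_of_nonneg_left hMbound hN.le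
      _ = N * γ * M + γ * Real.log (Fintype.card A) := by field_simp
  rw [div_mul_eq_mul_div, le_div_iff₀ (by positivity)]
  nlinarith [h2]
end

section
/- Let S and A be finite nonempty sets, p : S × A × S → ℝ with p(j|i,a) ≥ 0 and Σ_{j∈S} p(j|i,a) = 1 for all (i,a), r : S × A → ℝ, and 0 ≤ γ < 1. Let Q be the unique fixed point of the Q-Bellman operator T and, for each N > 0, let Q'_N be the unique fixed point of the modified Bellman operator U with parameter N. Then ‖Q − Q'_N‖ → 0 as N → ∞ (in the sup norm). -/
lemma lse_lower {A : Type*} [Fintype A] [Nonempty A] (g : A → ℝ) {N : ℝ} (hN : 0 < N) :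
    Finset.univ.sup' Finset.univ_nonempty g ≤ (1/N) * Real.log (∑ b, Real.exp (N * g b)) := by
  obtain ⟨b0, _, hb0⟩ := Finset.exists_mem_eq_sup' Finset.univ_nonempty g
  have hpos : 0 < ∑ b, Real.exp (N * g b) :=
    Finset.sum_pos (fun b _ => Real.exp_pos _) Finset.univ_nonempty
  have h1 : Real.exp (N * g b0) ≤ ∑ b, Real.exp (N * g b) :=
    Finset.single_le_sum (f := fun b => Real.exp (N * g b)) (fun b _ => (Real.exp_pos _).le) (Finset.mem_univ b0)
  have h2 : N * g b0 ≤ Real.log (∑ b, Real.exp (N * g b)) :=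
    (Real.le_log_iff_exp_le hpos).mpr h1
  rw [hb0, one_div_mul_eq_div, le_div_iff₀ hN]
  linarith

lemma lse_upper {A : Type*} [Fintype A] [Nonempty A] (g : A → ℝ) {N : ℝ} (hN : 0 < N) :
    (1/N) * Real.log (∑ b, Real.exp (N * g b)) ≤
      Finset.univ.sup' Finset.univ_nonempty g + Real.log (Fintype.card A) / N := by
  set s := Finset.univ.sup' Finset.univ_nonempty g with hs
  have h1 : (∑ b, Real.exp (N * g b)) ≤ (Fintype.card A : ℝ) * Real.exp (N * s) := by
    calc (∑ b, Real.exp (N * g b)) ≤ ∑ _b : A, Real.exp (N * s) := by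
          apply Finset.sum_le_sum
          intro b _
          exact Real.exp_le_exp.mpr (mul_le_mul_of_nonneg_left (Finset.le_sup' g (Finset.mem_univ b)) hN.le)
      _ = (Fintype.card A : ℝ) * Real.exp (N * s) := by
          rw [Finset.sum_const, nsmul_eq_mul, Finset.card_univ]
  have hcard : (0:ℝ) < Fintype.card A := by exact_mod_cast Fintype.card_pos
  have hpos : 0 < ∑ b, Real.exp (N * g b) :=
    Finset.sum_pos (fun b _ => Real.exp_pos _) Finset.univ_nonempty
  have h2 : Real.log (∑ b, Real.exp (N * g b)) ≤ Real.log (Fintype.card A) + N * s := by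
    calc Real.log (∑ b, Real.exp (N * g b)) ≤ Real.log ((Fintype.card A : ℝ) * Real.exp (N * s)) :=
          Real.log_le_log hpos h1
      _ = Real.log (Fintype.card A) + N * s := by
          rw [Real.log_mul (ne_of_gt hcard) (Real.exp_ne_zero _), Real.log_exp]
  have h3 : (1/N) * (Real.log (Fintype.card A) + N * s) = s + Real.log (Fintype.card A) / N := by
    field_simp; ring
  calc (1/N) * Real.log (∑ b, Real.exp (N * g b))
      ≤ (1/N) * (Real.log (Fintype.card A) + N * s) :=
        mul_le_mul_of_nonneg_left h2 (by positivity)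
    _ = s + Real.log (Fintype.card A) / N := h3

/-- If `Q` is the fixed point of `T` and `Q'_N` is, for each `N > 0`, the fixed point of
the modified Bellman operator with parameter `N`, then `‖Q − Q'_N‖ → 0` as `N → ∞`. -/
theorem fixedPoint_dist_tendsto_zero {S A : Type*}
    [Fintype S] [Fintype A] [Nonempty S] [Nonempty A]
    (p : S → A → S → ℝ) (hp0 : ∀ i a j, 0 ≤ p i a j) (hp1 : ∀ i a, ∑ j, p i a j = 1)
    (r : S → A → ℝ) (γ : ℝ) (hγ0 : 0 ≤ γ) (hγ1 : γ < 1)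
    (Q : S → A → ℝ) (hQ : bellmanT p r γ Q = Q)
    (Q' : ℝ → S → A → ℝ) (hQ' : ∀ N : ℝ, 0 < N → modBellmanU p r γ N (Q' N) = Q' N) :
    Filter.Tendsto (fun N : ℝ => qSupNorm (fun i a => Q i a - Q' N i a))
      Filter.atTop (nhds 0) := by
  set L : ℝ := Real.log (Fintype.card A) with hL
  have hL0 : 0 ≤ L := Real.log_nonneg (by exact_mod_cast Fintype.card_pos)
  have hγ' : 0 < 1 - γ := by linarith
  set C : ℝ := γ * L / (1 - γ) with hC
  clear_value L
  have hC0 : 0 ≤ C := div_nonneg (mul_nonneg hγ0 hL0) hγ'.le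
  clear_value C
  -- nonnegativity of the norm
  have hnn : ∀ N : ℝ, 0 ≤ qSupNorm (fun i a => Q i a - Q' N i a) := by
    intro N
    obtain ⟨ia⟩ := (inferInstance : Nonempty (S × A))
    exact le_trans (abs_nonneg _)
      (Finset.le_sup' (fun ia : S × A => |Q ia.1 ia.2 - Q' N ia.1 ia.2|) (Finset.mem_univ ia))
  -- key bound
  have key : ∀ N : ℝ, 0 < N → qSupNorm (fun i a => Q i a - Q' N i a) ≤ C / N := by
    intro N hN
    set M : ℝ := qSupNorm (fun i a => Q i a - Q' N i a) with hM
    clear_value M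
    have habs : ∀ j b, |Q j b - Q' N j b| ≤ M := by
      intro j b
      rw [hM, qSupNorm]
      exact Finset.le_sup' (fun ia : S × A => |Q ia.1 ia.2 - Q' N ia.1 ia.2|)
        (Finset.mem_univ (j, b))
    -- bound on difference of sup and log-sum-exp
    have hdiff : ∀ j : S,
        |Finset.univ.sup' Finset.univ_nonempty (fun b => Q j b)
          - (1/N) * Real.log (∑ b, Real.exp (N * Q' N j b))| ≤ M + L / N := by
      intro j
      set sQ := Finset.univ.sup' Finset.univ_nonempty (fun b => Q j b) with hsQ
      set sQ' := Finset.univ.sup' Finset.univ_nonempty (fun b => Q' N j b) with hsQ'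
      have hsup1 : sQ ≤ sQ' + M := by
        apply Finset.sup'_le
        intro b _
        have := habs j b
        have h1 : Q j b ≤ Q' N j b + M := by
          have := abs_le.mp (habs j b); linarith [this.2]
        exact le_trans h1 (by
          have := Finset.le_sup' (fun b => Q' N j b) (Finset.mem_univ b); linarith)
      have hsup2 : sQ' ≤ sQ + M := by
        apply Finset.sup'_le
        intro b _
        have h1 : Q' N j b ≤ Q j b + M := by
          have := abs_le.mp (habs j b); linarith [this.1]
        exact le_trans h1 (by
          have := Finset.le_sup' (fun b => Q j b) (Finset.mem_univ b); linarith)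
      have hlo : sQ' ≤ (1/N) * Real.log (∑ b, Real.exp (N * Q' N j b)) := by
        simpa [← hsQ'] using lse_lower (fun b => Q' N j b) hN
      have hhi : (1/N) * Real.log (∑ b, Real.exp (N * Q' N j b)) ≤ sQ' + L / N := by
        simpa [← hsQ', ← hL] using lse_upper (fun b => Q' N j b) hN
      have hLN : 0 ≤ L / N := div_nonneg hL0 hN.le
      rw [abs_le]
      constructor <;> [skip; skip]
      · -- lower: -(M + L/N) ≤ sQ - lse
        have : (1/N) * Real.log (∑ b, Real.exp (N * Q' N j b)) ≤ sQ' + L / N := hhi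
        linarith
      · have : sQ' ≤ (1/N) * Real.log (∑ b, Real.exp (N * Q' N j b)) := hlo
        linarith
    -- pointwise bound
    have pt : ∀ ia : S × A, |Q ia.1 ia.2 - Q' N ia.1 ia.2| ≤ γ * (M + L / N) := by
      intro ⟨i, a⟩
      have e1 : Q i a = bellmanT p r γ Q i a := by rw [hQ]
      have e2 : Q' N i a = modBellmanU p r γ N (Q' N) i a := by rw [hQ' N hN]
      simp only
      rw [e1, e2]
      simp only [bellmanT, modBellmanU]
      have : (r i a + γ * ∑ j, p i a j * Finset.univ.sup' Finset.univ_nonempty (fun b => Q j b))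
          - (r i a + γ * ∑ j, p i a j * ((1/N) * Real.log (∑ b, Real.exp (N * Q' N j b))))
          = γ * ∑ j, p i a j * (Finset.univ.sup' Finset.univ_nonempty (fun b => Q j b)
            - (1/N) * Real.log (∑ b, Real.exp (N * Q' N j b))) := by
        rw [add_sub_add_left_eq_sub, Finset.mul_sum, Finset.mul_sum, Finset.mul_sum,
          ← Finset.sum_sub_distrib]
        apply Finset.sum_congr rfl
        intro j _
        ring
      rw [this, abs_mul, abs_of_nonneg hγ0]
      apply mul_le_mul_of_nonneg_left _ hγ0
      calc |∑ j, p i a j * (Finset.univ.sup' Finset.univ_nonempty (fun b => Q j b)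
            - (1/N) * Real.log (∑ b, Real.exp (N * Q' N j b)))|
          ≤ ∑ j, |p i a j * (Finset.univ.sup' Finset.univ_nonempty (fun b => Q j b)
            - (1/N) * Real.log (∑ b, Real.exp (N * Q' N j b)))| := Finset.abs_sum_le_sum_abs _ _
        _ ≤ ∑ j, p i a j * (M + L / N) := by
            apply Finset.sum_le_sum
            intro j _
            rw [abs_mul, abs_of_nonneg (hp0 i a j)]
            exact mul_le_mul_of_nonneg_left (hdiff j) (hp0 i a j)
        _ = M + L / N := by rw [← Finset.sum_mul, hp1, one_mul]
    have hMle : M ≤ γ * (M + L / N) := by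
      conv_lhs => rw [hM, qSupNorm]
      apply Finset.sup'_le
      intro ia _
      exact pt ia
    -- conclude M ≤ C / N
    have h1 : M * (1 - γ) ≤ γ * (L / N) := by rw [mul_add] at hMle; linarith
    rw [hC, div_div, le_div_iff₀ (by positivity : (0:ℝ) < (1 - γ) * N)]
    have h2 : M * (1 - γ) * N ≤ (γ * (L / N)) * N := mul_le_mul_of_nonneg_right h1 hN.le
    have h3 : (γ * (L / N)) * N = γ * L := by field_simp
    rw [h3] at h2
    linarith
  -- squeeze
  have htend : Filter.Tendsto (fun N : ℝ => C / N) Filter.atTop (nhds 0) :=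
    Filter.Tendsto.div_atTop tendsto_const_nhds Filter.tendsto_id
  apply squeeze_zero' (Filter.Eventually.of_forall hnn) _ htend
  filter_upwards [Filter.eventually_gt_atTop 0] with N hN
  exact key N hN
end

section
/- (Global Newton Theorem) Let F : ℝ^d → ℝ^d be continuously differentiable, with each component function x ↦ F_i(x) concave on ℝ^d. Suppose that for every x ∈ ℝ^d the Jacobian matrix F'(x) is invertible and every entry of F'(x)^{-1} is nonnegative, and that F(x) = 0 has a unique solution x* ∈ ℝ^d. Then for any starting point x_0 ∈ ℝ^d, the Newton iterates x_n = x_{n−1} − F'(x_{n−1})^{-1}·F(x_{n−1}), n ≥ 1, converge to x*. -/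
/-- The Jacobian matrix of a map `F : ℝ^d → ℝ^d` at `x`:
`(i,j)` entry is `∂F_i/∂x_j (x)`. -/
noncomputable def jacobianMatrix {d : ℕ} (F : (Fin d → ℝ) → (Fin d → ℝ))
    (x : Fin d → ℝ) : Matrix (Fin d) (Fin d) ℝ :=
  Matrix.of fun i j => fderiv ℝ F x (Pi.single j 1) i

open Filter Set in
/-- Tangent line inequality for a concave function. -/
lemma concave_tangent_le {E : Type*} [NormedAddCommGroup E] [NormedSpace ℝ E]
    {g : E → ℝ} {g' : E →L[ℝ] ℝ} {a b : E}
    (hg : ConcaveOn ℝ Set.univ g) (hd : HasFDerivAt g g' a) :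
    g b ≤ g a + g' (b - a) := by
  set φ : ℝ → ℝ := fun t => g (a + t • (b - a)) with hφ
  have hline : ∀ t : ℝ, HasDerivAt (fun s : ℝ => a + s • (b - a)) (b - a) t := by
    intro t
    simpa using ((hasDerivAt_id t).smul_const (b - a)).const_add a
  have hd' : HasFDerivAt g g' (a + (0:ℝ) • (b - a)) := by simpa using hd
  have hφd : HasDerivAt φ (g' (b - a)) 0 := hd'.comp_hasDerivAt 0 (hline 0)
  have hφc : ConcaveOn ℝ Set.univ φ := by
    have := hg.comp_affineMap (AffineMap.lineMap a b : ℝ →ᵃ[ℝ] E)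
    have hpre : (AffineMap.lineMap a b : ℝ →ᵃ[ℝ] E) ⁻¹' Set.univ = Set.univ := by simp
    rw [hpre] at this
    convert this using 1
    iterate 4 rfl
    funext t
    simp [φ, AffineMap.lineMap_apply_module]
    ring_nf
    congr 1
    module
  have hslope := hφc.slope_le_of_hasDerivAt (Set.mem_univ 0) (Set.mem_univ 1) one_pos hφd
  have h1 : φ 1 = g b := by simp [φ]
  have h0 : φ 0 = g a := by simp [φ]
  rw [slope_def_field] at hslope
  rw [h1, h0] at hslope
  have : (g b - g a) / (1 - 0) = g b - g a := by norm_num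
  rw [this] at hslope
  linarith

lemma jac_mulVec {d : ℕ} (F : (Fin d → ℝ) → (Fin d → ℝ)) (a v : Fin d → ℝ) :
    (jacobianMatrix F a).mulVec v = fderiv ℝ F a v := by
  funext i
  have hv : v = ∑ j, v j • (Pi.single j 1 : Fin d → ℝ) := by
    funext k
    simp [Pi.single_apply]
  conv_rhs => rw [hv]
  rw [map_sum]
  simp [jacobianMatrix, Matrix.mulVec, dotProduct, Finset.sum_apply, mul_comm]

/-- **Global Newton Theorem.** If `F : ℝ^d → ℝ^d` is continuously differentiable with
each component concave, the Jacobian `F'(x)` is everywhere invertible with entrywise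
nonnegative inverse, and `F(x) = 0` has a unique solution `x*`, then from any starting
point the Newton iterates `x_{n+1} = x_n − F'(x_n)⁻¹ F(x_n)` converge to `x*`. -/
theorem global_newton (d : ℕ) (F : (Fin d → ℝ) → (Fin d → ℝ))
    (hF : ContDiff ℝ 1 F)
    (hconc : ∀ i : Fin d, ConcaveOn ℝ Set.univ (fun x => F x i))
    (hinv : ∀ x : Fin d → ℝ, IsUnit (jacobianMatrix F x))
    (hpos : ∀ (x : Fin d → ℝ) (i j : Fin d), 0 ≤ (jacobianMatrix F x)⁻¹ i j)
    (xstar : Fin d → ℝ) (hroot : F xstar = 0)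
    (huniq : ∀ y : Fin d → ℝ, F y = 0 → y = xstar)
    (x : ℕ → Fin d → ℝ)
    (hiter : ∀ n : ℕ, x (n + 1) = x n - (jacobianMatrix F (x n))⁻¹.mulVec (F (x n))) :
    Filter.Tendsto x Filter.atTop (nhds xstar) := by
  classical
  have hdF : Differentiable ℝ F := hF.differentiable one_ne_zero
  have hdet : ∀ z, IsUnit (jacobianMatrix F z).det :=
    fun z => (Matrix.isUnit_iff_isUnit_det _).mp (hinv z)
  have hJJinv : ∀ z v, (jacobianMatrix F z).mulVec ((jacobianMatrix F z)⁻¹.mulVec v) = v := by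
    intro z v
    rw [Matrix.mulVec_mulVec, Matrix.mul_nonsing_inv _ (hdet z), Matrix.one_mulVec]
  have hJinvJ : ∀ z v, (jacobianMatrix F z)⁻¹.mulVec ((jacobianMatrix F z).mulVec v) = v := by
    intro z v
    rw [Matrix.mulVec_mulVec, Matrix.nonsing_inv_mul _ (hdet z), Matrix.one_mulVec]
  have hcomp : ∀ (a : Fin d → ℝ) (i : Fin d), HasFDerivAt (fun z => F z i)
      ((ContinuousLinearMap.proj i).comp (fderiv ℝ F a)) a :=
    fun a i => hasFDerivAt_pi'.mp (hdF a).hasFDerivAt i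
  have grad : ∀ a b : Fin d → ℝ, ∀ i, F b i ≤ F a i + fderiv ℝ F a (b - a) i := by
    intro a b i
    have := concave_tangent_le (b := b) (hconc i) (hcomp a i)
    simpa using this
  have hmulVec : ∀ a v, (jacobianMatrix F a).mulVec v = fderiv ℝ F a v := jac_mulVec F
  have mulVec_nonneg : ∀ (M : Matrix (Fin d) (Fin d) ℝ) (v : Fin d → ℝ),
      (∀ i j, 0 ≤ M i j) → (∀ j, 0 ≤ v j) → ∀ i, 0 ≤ M.mulVec v i := by
    intro M v hM hv i
    simp only [Matrix.mulVec, dotProduct]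
    exact Finset.sum_nonneg fun j _ => mul_nonneg (hM i j) (hv j)
  have hFle : ∀ n i, F (x (n+1)) i ≤ 0 := by
    intro n i
    have h1 := grad (x n) (x (n+1)) i
    have h2 : x (n+1) - x n = -((jacobianMatrix F (x n))⁻¹.mulVec (F (x n))) := by
      rw [hiter n, sub_sub_cancel_left]
    have h3 : fderiv ℝ F (x n) (x (n+1) - x n) = -(F (x n)) := by
      rw [h2, map_neg, ← hmulVec, hJJinv]
    rw [h3] at h1
    simpa using h1
  have hmono : ∀ n i, x (n+1) i ≤ x (n+2) i := by
    intro n i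
    have h : x (n+2) = x (n+1) + (jacobianMatrix F (x (n+1)))⁻¹.mulVec (-(F (x (n+1)))) := by
      rw [hiter (n+1), Matrix.mulVec_neg, sub_eq_add_neg]
    have hnn := mulVec_nonneg _ (-(F (x (n+1)))) (hpos (x (n+1)))
      (fun j => neg_nonneg.mpr (hFle n j)) i
    rw [h]
    simp only [Pi.add_apply]
    linarith
  have hub : ∀ n i, x (n+1) i ≤ xstar i := by
    intro n i
    have key : ∀ j, 0 ≤ (jacobianMatrix F (x (n+1))).mulVec (xstar - x (n+1)) j := by
      intro j
      have h1 := grad (x (n+1)) xstar j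
      have h0 : F xstar j = (0:ℝ) := by rw [hroot]; rfl
      rw [h0, ← hmulVec] at h1
      have h3 := hFle n j
      linarith
    have h4 := mulVec_nonneg _ _ (hpos (x (n+1))) key i
    rw [hJinvJ] at h4
    have : (xstar - x (n+1)) i = xstar i - x (n+1) i := rfl
    linarith [this ▸ h4]
  set y : ℕ → Fin d → ℝ := fun n => x (n+1) with hy
  set L : Fin d → ℝ := fun i => ⨆ n, y n i with hL
  have hyL : Filter.Tendsto y Filter.atTop (nhds L) := by
    rw [tendsto_pi_nhds]
    intro i
    exact tendsto_atTop_ciSup (monotone_nat_of_le_succ fun n => hmono n i)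
      ⟨xstar i, by rintro b ⟨n, rfl⟩; exact hub n i⟩
  have hy1L : Filter.Tendsto (fun n => y (n+1)) Filter.atTop (nhds L) :=
    hyL.comp (Filter.tendsto_add_atTop_nat 1)
  have hdiff0 : Filter.Tendsto (fun n => y n - y (n+1)) Filter.atTop (nhds 0) := by
    simpa using hyL.sub hy1L
  have hFeq : ∀ n, F (y n) = fderiv ℝ F (y n) (y n - y (n+1)) := by
    intro n
    have h2 : (jacobianMatrix F (y n))⁻¹.mulVec (F (y n)) = y n - y (n+1) := by
      simp [hy, hiter (n+1), sub_sub_cancel]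
    calc F (y n) = (jacobianMatrix F (y n)).mulVec
          ((jacobianMatrix F (y n))⁻¹.mulVec (F (y n))) := (hJJinv _ _).symm
      _ = fderiv ℝ F (y n) (y n - y (n+1)) := by rw [h2, hmulVec]
  have happly : Continuous fun p : ((Fin d → ℝ) →L[ℝ] (Fin d → ℝ)) × (Fin d → ℝ) => p.1 p.2 :=
    isBoundedBilinearMap_apply.continuous
  have hfd : Filter.Tendsto (fun n => fderiv ℝ F (y n)) Filter.atTop (nhds (fderiv ℝ F L)) :=
    ((hF.continuous_fderiv one_ne_zero).tendsto L).comp hyL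
  have hprod : Filter.Tendsto (fun n => fderiv ℝ F (y n) (y n - y (n+1))) Filter.atTop
      (nhds (fderiv ℝ F L 0)) :=
    (happly.tendsto (fderiv ℝ F L, 0)).comp (hfd.prodMk_nhds hdiff0)
  have hFL0 : Filter.Tendsto (fun n => F (y n)) Filter.atTop (nhds (F L)) :=
    (hdF.continuous.tendsto L).comp hyL
  have hFL : F L = 0 := by
    have := tendsto_nhds_unique hFL0 (hprod.congr fun n => (hFeq n).symm)
    simpa using this
  have hLx : L = xstar := huniq L hFL
  have : Filter.Tendsto (fun n => x (n+1)) Filter.atTop (nhds xstar) := hLx ▸ hyL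
  exact (Filter.tendsto_add_atTop_iff_nat 1).mp this
end
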